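/- One has 0 < r_0 < 1, and for every i ≥ 0 the boundary probabilities are exactly geometric: pi_{i,0} = pi_{0,0}·r_0^i. -/

import Mathlib

set_option maxHeartbeats 1600000


/-- The balance equations of the discrete-time preemptive priority queue
(early arrival system). -/
def BalanceEquations (p q mh ml : ℝ) (pi : ℕ → ℕ → ℝ) : Prop :=
  ((1 - ((1-p)*(1-q) + p*(1-q)*mh + (1-p)*q*ml)) * pi 0 0 =
      (1-p)*(1-q)*mh * pi 1 0 + (1-p)*(1-q)*ml * pi 0 1) ∧
  (∀ i : ℕ, 1 ≤ i →
    (1 - ((1-p)*(1-q)*(1-mh) + p*(1-q)*mh)) * pi i 0 =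
      p*(1-q)*(1-mh) * pi (i-1) 0 + (1-p)*(1-q)*mh * pi (i+1) 0) ∧
  (∀ j : ℕ, 1 ≤ j →
    (1 - ((1-p)*(1-q)*(1-ml) + p*(1-q)*mh + (1-p)*q*ml)) * pi 0 j =
      (p*q*mh + (1-p)*q*(1-ml)) * pi 0 (j-1) + (1-p)*(1-q)*ml * pi 0 (j+1) +
      (1-p)*q*mh * pi 1 (j-1) + (1-p)*(1-q)*mh * pi 1 j) ∧
  (∀ i j : ℕ, 1 ≤ i → 1 ≤ j →
    (1 - ((1-p)*(1-q)*(1-mh) + p*(1-q)*mh)) * pi i j =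
      p*(1-q)*(1-mh) * pi (i-1) j + (1-p)*(1-q)*mh * pi (i+1) j +
      (1-p)*q*mh * pi (i+1) (j-1) + (p*q*mh + (1-p)*q*(1-mh)) * pi i (j-1) +
      p*q*(1-mh) * pi (i-1) (j-1))

/-- the boundary probabilities `pi_{i,0}` are exactly geometric
with ratio `r_0 ∈ (0,1)`. -/
theorem boundary_geometric
    (p q mh ml : ℝ)
    (hp : p ∈ Set.Ioo (0:ℝ) 1) (hq : q ∈ Set.Ioo (0:ℝ) 1)
    (hmh : mh ∈ Set.Ioo (0:ℝ) 1) (hml : ml ∈ Set.Ioo (0:ℝ) 1)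
    (hpar : p + q + mh + ml = 1)
    (hrho : p / mh + q / ml < 1)
    (Delta : ℝ → ℝ)
    (hDelta : ∀ y, Delta y = ((p*mh + (1-p)*(1-mh))*(q*y + 1 - q) - 1)^2
        - 4 * (p*(1-mh)*(q*y + 1 - q)) * ((1-p)*mh*(q*y + 1 - q)))
    (x10 r0 : ℝ)
    (hx10 : x10 = (1 - (p*mh + (1-p)*(1-mh))*(1-q) + Real.sqrt (Delta 0))
        / (2*p*(1-mh)*(1-q)))
    (hr0 : r0 = 1 / x10)
    (pi : ℕ → ℕ → ℝ)
    (hnn : ∀ i j : ℕ, 0 ≤ pi i j)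
    (hsum : HasSum (fun ij : ℕ × ℕ => pi ij.1 ij.2) 1)
    (hbal : BalanceEquations p q mh ml pi) :
    0 < r0 ∧ r0 < 1 ∧ ∀ i : ℕ, pi i 0 = pi 0 0 * r0 ^ i := by
  obtain ⟨hp0, hp1⟩ := hp
  obtain ⟨hq0, hq1⟩ := hq
  obtain ⟨hmh0, hmh1⟩ := hmh
  obtain ⟨A, hAdef⟩ : ∃ A : ℝ, A = 1 - ((1-p)*(1-q)*(1-mh) + p*(1-q)*mh) := ⟨_, rfl⟩
  obtain ⟨B, hBdef⟩ : ∃ B : ℝ, B = p*(1-q)*(1-mh) := ⟨_, rfl⟩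
  obtain ⟨C, hCdef⟩ : ∃ C : ℝ, C = (1-p)*(1-q)*mh := ⟨_, rfl⟩
  have hB : 0 < B := by rw [hBdef]; apply mul_pos (mul_pos hp0 (by linarith)); linarith
  have hC : 0 < C := by rw [hCdef]; apply mul_pos (mul_pos (by linarith) (by linarith)); linarith
  have hABC : A = B + C + q := by rw [hAdef, hBdef, hCdef]; ring
  have hA : 0 < A := by linarith
  have hD0 : Delta 0 = A^2 - 4*B*C := by rw [hDelta 0, hAdef, hBdef, hCdef]; ring
  have hDpos : 0 < Delta 0 := by
    rw [hD0, hABC]; nlinarith [sq_nonneg (B - C), mul_pos hB hC, sq_nonneg q]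
  obtain ⟨s, hsdef⟩ : ∃ s : ℝ, s = Real.sqrt (Delta 0) := ⟨_, rfl⟩
  have hs2 : s^2 = A^2 - 4*B*C := by rw [hsdef, Real.sq_sqrt hDpos.le, hD0]
  have hspos : 0 < s := hsdef ▸ Real.sqrt_pos.mpr hDpos
  have hsA : s < A := by nlinarith [mul_pos hB hC]
  have hr0v : r0 = (A - s) / (2*C) := by
    rw [hr0, hx10, ← hsdef, one_div_div]
    rw [div_eq_div_iff (by nlinarith [hAdef]) (by linarith)]
    have hnum : 1 - (p*mh + (1-p)*(1-mh))*(1-q) = A := by rw [hAdef]; ring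
    rw [hnum]
    linear_combination hs2 - 4*C*hBdef
  have hr0pos : 0 < r0 := by rw [hr0v]; apply div_pos (by linarith); linarith
  have hr0lt1 : r0 < 1 := by
    rw [hr0v, div_lt_one (by linarith)]
    nlinarith [mul_pos hC hq0]
  obtain ⟨r1, hr1def⟩ : ∃ r1 : ℝ, r1 = (A + s) / (2*C) := ⟨_, rfl⟩
  have hkey : (s - (2*C - A)) * (s + (2*C - A)) = 4*C*q := by
    linear_combination hs2 + 4*C*hABC
  have hr1gt1 : 1 < r1 := by
    rw [hr1def, lt_div_iff₀ (by linarith)]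
    rcases le_or_gt (2*C) A with h | h
    · linarith
    · by_contra hcon
      push_neg at hcon
      nlinarith [hkey, mul_pos hC hq0]
  have hroot0 : C * r0^2 - A * r0 + B = 0 := by
    rw [hr0v]; field_simp; linear_combination hs2
  have hroot1 : C * r1^2 - A * r1 + B = 0 := by
    rw [hr1def]; field_simp; linear_combination hs2
  have hr10 : r1 - r0 = s / C := by rw [hr1def, hr0v]; field_simp; ring
  have hr10pos : 0 < r1 - r0 := by rw [hr10]; exact div_pos hspos hC
  -- the boundary recurrence
  have hrec : ∀ n : ℕ, A * pi (n+1) 0 = B * pi n 0 + C * pi (n+2) 0 := by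
    intro n
    have h := hbal.2.1 (n+1) (by omega)
    simp only [Nat.add_sub_cancel] at h
    rw [← hAdef, ← hBdef, ← hCdef] at h
    exact h
  -- summability along the boundary
  have hsummable : Summable fun n : ℕ => pi n 0 := by
    have h := hsum.summable
    have hinj : Function.Injective (fun n : ℕ => ((n, 0) : ℕ × ℕ)) := by
      intro a b hab
      simpa using congrArg Prod.fst hab
    exact h.comp_injective hinj
  have hatend : Filter.Tendsto (fun n : ℕ => pi n 0) Filter.atTop (nhds 0) :=
    hsummable.tendsto_atTop_zero
  obtain ⟨bet, hbet⟩ : ∃ b : ℝ, b = (pi 1 0 - pi 0 0 * r0) / (r1 - r0) := ⟨_, rfl⟩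
  have hbet' : bet * (r1 - r0) = pi 1 0 - pi 0 0 * r0 := by
    rw [hbet, div_mul_cancel₀ _ hr10pos.ne']
  obtain ⟨alp, halp⟩ : ∃ a : ℝ, a = pi 0 0 - bet := ⟨_, rfl⟩
  have hform : ∀ n : ℕ, pi n 0 = alp * r0^n + bet * r1^n := by
    intro n
    induction n using Nat.twoStepInduction with
    | zero => rw [halp]; ring
    | one => linear_combination -hbet' - r0 * halp
    | more n ih1 ih2 =>
      have hg : C * pi (n+2) 0 = C * (alp * r0^(n+2) + bet * r1^(n+2)) := by
        linear_combination -(hrec n) + A*ih2 - B*ih1 - (alp*r0^n)*hroot0 - (bet*r1^n)*hroot1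
      exact mul_left_cancel₀ hC.ne' hg
  have hr0abs : |r0| < 1 := abs_lt.mpr ⟨by linarith, hr0lt1⟩
  have hpow0 : Filter.Tendsto (fun n : ℕ => alp * r0^n) Filter.atTop (nhds 0) := by
    simpa using (tendsto_pow_atTop_nhds_zero_of_abs_lt_one hr0abs).const_mul alp
  have hbt : Filter.Tendsto (fun n : ℕ => bet * r1^n) Filter.atTop (nhds 0) := by
    have heq : (fun n : ℕ => bet * r1^n) = fun n : ℕ => pi n 0 - alp * r0^n := by
      funext n; rw [hform n]; ring
    rw [heq]
    simpa using hatend.sub hpow0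
  have hbet0 : bet = 0 := by
    by_contra hb
    have h1 : ∀ n : ℕ, |bet| ≤ |bet * r1^n| := by
      intro n
      rw [abs_mul, abs_pow, abs_of_pos (by linarith : (0:ℝ) < r1)]
      have h2 : (1:ℝ) ≤ r1^n := one_le_pow₀ hr1gt1.le
      nlinarith [abs_nonneg bet]
    have h0 : Filter.Tendsto (fun n : ℕ => |bet * r1^n|) Filter.atTop (nhds 0) := by
      simpa using hbt.abs
    obtain ⟨n, hn⟩ := (h0.eventually (gt_mem_nhds (abs_pos.mpr hb))).exists
    exact absurd (h1 n) (not_le.mpr hn)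
  refine ⟨hr0pos, hr0lt1, fun i => ?_⟩
  rw [hform i, hbet0, halp, hbet0]
  ring
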